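/- Let k be a field and 2 ≤ d ≤ n − 2. Let A ∈ k^{(d+1)×n} be a matrix all of whose columns are nonzero, representing a strongly non-degenerate point configuration (for every nonzero row vector u ∈ k^{d+1}, the row vector u·A has at least two nonzero entries). Let B ∈ k^{(n−d−1)×n} be an affine Gale transform of A (rank B = n − d − 1 and A·Bᵀ = 0). Then B also represents a strongly non-degenerate configuration: every column of B is nonzero, and for every nonzero row vector w ∈ k^{n−d−1}, the row vector w·B has at least two nonzero entries. -/

import Mathlib

/-- A matrix `A ∈ k^{m×n}` with nonzero columns represents a strongly non-degenerate
point configuration if for every nonzero row vector `u`, the row vector `u·A` has at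
least two nonzero entries. -/
def StronglyNondegenerate {k : Type*} [Field k] {m n : ℕ}
    (A : Matrix (Fin m) (Fin n) k) : Prop :=
  (∀ i, (fun r => A r i) ≠ 0) ∧
    ∀ u : Fin m → k, u ≠ 0 → ∃ i j : Fin n, i ≠ j ∧
      (∑ r, u r * A r i) ≠ 0 ∧ (∑ r, u r * A r j) ≠ 0

/-- Proposition 4.11(3): every affine Gale transform of a strongly non-degenerate
configuration is strongly non-degenerate. -/
theorem gale_of_stronglyNondegenerate {k : Type*} [Field k] {d n : ℕ}
    (hd : 2 ≤ d) (hn : d + 2 ≤ n)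
    (A : Matrix (Fin (d + 1)) (Fin n) k) (hA : StronglyNondegenerate A)
    (B : Matrix (Fin (n - d - 1)) (Fin n) k)
    (hB : B.rank = n - d - 1) (hAB : A * B.transpose = 0) :
    StronglyNondegenerate B := by
  classical
  -- rank-nullity for B.mulVecLin : (Fin n → k) →ₗ (Fin (n-d-1) → k)
  have hrn := LinearMap.finrank_range_add_finrank_ker B.mulVecLin
  rw [Module.finrank_fin_fun] at hrn
  have hrange : Module.finrank k (LinearMap.range B.mulVecLin) = n - d - 1 := hB
  have hker : Module.finrank k (LinearMap.ker B.mulVecLin) = d + 1 := by omega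
  constructor
  · -- every column of B is nonzero
    intro i
    intro hcol
    -- rows of A are in ker B.mulVecLin
    have hrow : ∀ r : Fin (d + 1), B.mulVec (A r) = 0 := by
      intro r
      funext s
      have h0 : (A * B.transpose) r s = 0 := by rw [hAB]; rfl
      simpa [Matrix.mul_apply, Matrix.mulVec, dotProduct, mul_comm] using h0
    have hei : B.mulVec (Pi.single i 1) = 0 := by
      simp only [Matrix.mulVec_single, mul_one, MulOpposite.op_one, one_smul]
      exact hcol
    -- the d+2 vectors (rows of A, e_i) in the (d+1)-dim'l kernel
    set K := LinearMap.ker B.mulVecLin with hK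
    set v : Fin (d + 1 + 1) → (Fin n → k) :=
      Fin.snoc (fun r => A r) (Pi.single i 1) with hv
    have hmem : ∀ j, v j ∈ K := by
      intro j
      refine Fin.lastCases ?_ ?_ j
      · simp only [hv, Fin.snoc_last]
        exact hei
      · intro r
        simp only [hv, Fin.snoc_castSucc]
        exact hrow r
    set v' : Fin (d + 1 + 1) → K := fun j => ⟨v j, hmem j⟩ with hv'
    have hnli : ¬ LinearIndependent k v' := by
      intro hli
      have := hli.fintype_card_le_finrank
      rw [hker, Fintype.card_fin] at this
      omega
    obtain ⟨g, hgsum, j₀, hj₀⟩ := Fintype.not_linearIndependent_iff.mp hnli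
    have hsum : ∑ j, g j • v j = 0 := by
      have := congrArg (Subtype.val : K → (Fin n → k)) hgsum
      simpa using this
    set u : Fin (d + 1) → k := fun r => g r.castSucc with hu
    set c : k := g (Fin.last (d + 1)) with hc
    have hsum' : (∑ r, u r • (A r : Fin n → k)) + c • (Pi.single i 1 : Fin n → k) = 0 := by
      rw [Fin.sum_univ_castSucc] at hsum
      simpa [hv, hu, hc] using hsum
    -- evaluate at coordinates
    have heval : ∀ t : Fin n, (∑ r, u r * A r t) + c * (Pi.single i 1 : Fin n → k) t = 0 := by
      intro t
      have := congrFun hsum' t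
      simpa [Finset.sum_apply] using this
    by_cases hu0 : u = 0
    · -- then c ≠ 0 but c • e_i = 0
      have hc0 : c ≠ 0 := by
        rcases Fin.eq_castSucc_or_eq_last j₀ with ⟨r, hr⟩ | hr
        · exact absurd (by rw [hr]; exact congrFun hu0 r) hj₀
        · rw [hc, ← hr]; exact hj₀
      have := heval i
      simp [hu0, Pi.single_apply] at this
      exact absurd this hc0
    · obtain ⟨i', j', hij, hi', hj'⟩ := hA.2 u hu0
      have hzero : ∀ t : Fin n, t ≠ i → (∑ r, u r * A r t) = 0 := by
        intro t ht
        have := heval t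
        rwa [Pi.single_apply, if_neg ht, mul_zero, add_zero] at this
      rcases eq_or_ne i' i with h1 | h1
      · exact hj' (hzero j' (h1 ▸ hij.symm ∘ Eq.symm ∘ id ∘ Eq.symm))
      · exact hi' (hzero i' h1)
  · -- w·B has at least two nonzero entries
    intro w hw
    -- rows of B are linearly independent
    have hrnT := LinearMap.finrank_range_add_finrank_ker B.transpose.mulVecLin
    rw [Module.finrank_fin_fun] at hrnT
    have hrT : Module.finrank k (LinearMap.range B.transpose.mulVecLin) = n - d - 1 := by
      have := Matrix.rank_transpose B
      rw [hB] at this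
      exact this
    have hkerT : LinearMap.ker B.transpose.mulVecLin = ⊥ :=
      Submodule.finrank_eq_zero.mp (by omega)
    have hwB : B.transpose.mulVec w ≠ 0 := by
      intro h
      have hwmem : w ∈ LinearMap.ker B.transpose.mulVecLin := by
        rw [LinearMap.mem_ker, Matrix.mulVecLin_apply]; exact h
      rw [hkerT, Submodule.mem_bot] at hwmem
      exact hw hwmem
    set s : Fin n → k := fun t => ∑ r, w r * B r t with hs
    have hseq : s = B.transpose.mulVec w := by
      funext t
      simp [hs, Matrix.mulVec, dotProduct, Matrix.transpose_apply, mul_comm]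
    have hAs : A.mulVec s = 0 := by
      rw [hseq, Matrix.mulVec_mulVec, hAB, Matrix.zero_mulVec]
    by_contra hcon
    push_neg at hcon
    -- s has exactly one nonzero coordinate
    have hsne : s ≠ 0 := hseq ▸ hwB
    obtain ⟨i, hi⟩ := Function.ne_iff.mp hsne
    have hi' : s i ≠ 0 := hi
    have hione : ∀ t, t ≠ i → s t = 0 := fun t ht => hcon i t (fun h => ht h.symm) hi'
    -- then column i of A is zero
    have hAcol : (fun r => A r i) = 0 := by
      funext r
      have h0 : (A.mulVec s) r = 0 := congrFun hAs r
      rw [Matrix.mulVec, dotProduct] at h0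
      rw [Finset.sum_eq_single i (fun t _ ht => by rw [hione t ht, mul_zero])
        (fun h => absurd (Finset.mem_univ i) h)] at h0
      have := mul_eq_zero.mp h0
      rcases this with h | h
      · exact h
      · exact absurd h hi'
    exact hA.1 i hAcol
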